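/- Let P ⊆ ℝ^d be a reflexive lattice polytope, and let f : ℤ → ℚ be a polynomial function such that f(m) = #(mP ∩ ℤ^d) for all integers m ≥ 0 and f(−m) = (−1)^d · #(interior(mP) ∩ ℤ^d) for all integers m ≥ 1 (Ehrhart reciprocity). Then f(m−1) = (−1)^d · f(−m) for every integer m. -/

import Mathlib

open Pointwise

/-- Let `P ⊆ ℝ^d` be a reflexive lattice polytope, and let `f : ℤ → ℚ` be a
polynomial function with `f m = #(mP ∩ ℤ^d)` for `m ≥ 0` and
`f (-m) = (-1)^d * #(interior(mP) ∩ ℤ^d)` for `m ≥ 1` (Ehrhart reciprocity).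
Then `f (m - 1) = (-1)^d * f (-m)` for every integer `m`. -/
theorem stmt_3 (d : ℕ) (S : Finset (Fin d → ℤ)) (P : Set (Fin d → ℝ))
    (hP : P = convexHull ℝ ((fun v : Fin d → ℤ => fun i => (v i : ℝ)) '' S))
    (h0 : (0 : Fin d → ℝ) ∈ interior P)
    (T : Finset (Fin d → ℤ))
    (hpolar : {y : Fin d → ℝ | ∀ x ∈ P, ∑ i, x i * y i ≤ 1} =
      convexHull ℝ ((fun v : Fin d → ℤ => fun i => (v i : ℝ)) '' T))
    (f : ℤ → ℚ) (p : Polynomial ℚ) (hpoly : ∀ m : ℤ, f m = p.eval (m : ℚ))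
    (hf : ∀ m : ℕ,
      f (m : ℤ) = (Set.ncard {v : Fin d → ℤ | (fun i => (v i : ℝ)) ∈ (m : ℝ) • P} : ℚ))
    (hrec : ∀ m : ℕ, 1 ≤ m →
      f (-(m : ℤ)) = (-1 : ℚ) ^ d *
        (Set.ncard {v : Fin d → ℤ | (fun i => (v i : ℝ)) ∈ interior ((m : ℝ) • P)} : ℚ)) :
    ∀ m : ℤ, f (m - 1) = (-1 : ℚ) ^ d * f (-m) := by
  classical
  have hPconv : Convex ℝ P := hP ▸ convex_convexHull ℝ _
  have hPcpt : IsCompact P := hP ▸ Set.Finite.isCompact_convexHull ℝ ((S.finite_toSet).image _)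
  have hPclosed : IsClosed P := hPcpt.isClosed
  have h0P : (0 : Fin d → ℝ) ∈ P := interior_subset h0
  have hPmem : ∀ x ∈ P, ∀ t ∈ T, ∑ i, x i * (t i : ℝ) ≤ 1 := by
    intro x hx t ht
    have hmem : (fun i => (t i : ℝ)) ∈ {y : Fin d → ℝ | ∀ x ∈ P, ∑ i, x i * y i ≤ 1} := by
      rw [hpolar]
      exact subset_convexHull ℝ _ ⟨t, ht, rfl⟩
    exact hmem x hx
  -- bipolar direction
  have hKey : ∀ x : Fin d → ℝ, (∀ t ∈ T, ∑ i, x i * (t i : ℝ) ≤ 1) → x ∈ P := by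
    intro x hx
    by_contra hxP
    obtain ⟨g, u, hgu, hux⟩ := geometric_hahn_banach_closed_point hPconv hPclosed hxP
    have hu : 0 < u := by have := hgu 0 h0P; simpa using this
    set y : Fin d → ℝ := fun i => g (fun j => if i = j then 1 else 0) / u with hy
    have hgy : ∀ z : Fin d → ℝ, ∑ i, z i * y i = g z / u := by
      intro z
      rw [show (g z) = (g.toLinearMap) z from rfl,
        LinearMap.pi_apply_eq_sum_univ g.toLinearMap z, Finset.sum_div]
      refine Finset.sum_congr rfl fun i _ => ?_
      simp [hy, mul_div_assoc]
    have hyP : y ∈ {y : Fin d → ℝ | ∀ x ∈ P, ∑ i, x i * y i ≤ 1} := by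
      intro a ha
      rw [hgy]
      exact le_of_lt ((div_lt_one hu).mpr (hgu a ha))
    rw [hpolar] at hyP
    have hlin : IsLinearMap ℝ (fun w : Fin d → ℝ => ∑ i, x i * w i) := by
      constructor
      · intro a b; simp [mul_add, Finset.sum_add_distrib]
      · intro c a; simp [Finset.mul_sum, mul_left_comm]
    have hC : (convexHull ℝ ((fun v : Fin d → ℤ => fun i => (v i : ℝ)) '' T)) ⊆
        {w : Fin d → ℝ | ∑ i, x i * w i ≤ 1} := by
      apply convexHull_min
      · rintro _ ⟨t, ht, rfl⟩; exact hx t ht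
      · exact convex_halfSpace_le hlin 1
    have h1 := hC hyP
    rw [Set.mem_setOf_eq, hgy] at h1
    have h2 : g x ≤ u := (div_le_one hu).mp h1
    linarith
  obtain ⟨C, hC⟩ : ∃ C, ∀ z ∈ P, ‖z‖ ≤ C := isBounded_iff_forall_norm_le.mp hPcpt.isBounded
  have hA : ∀ (c : ℝ), 0 ≤ c → ∀ x : Fin d → ℝ,
      (x ∈ c • P ↔ ∀ t ∈ T, ∑ i, x i * (t i : ℝ) ≤ c) := by
    intro c hc x
    rcases hc.eq_or_lt with hc0 | hc0
    · subst hc0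
      constructor
      · rintro ⟨z, hz, rfl⟩
        intro t ht
        simp
      · intro hx
        have hx0 : x = 0 := by
          by_contra hne
          have hmem : ∀ n : ℕ, (n : ℝ) • x ∈ P := by
            intro n
            apply hKey
            intro t ht
            have h1 := hx t ht
            have hsum : ∑ i, ((n : ℝ) • x) i * (t i : ℝ) = (n : ℝ) * ∑ i, x i * (t i : ℝ) := by
              rw [Finset.mul_sum]
              exact Finset.sum_congr rfl fun i _ => by simp [mul_assoc]
            rw [hsum]
            nlinarith [Nat.cast_nonneg (α := ℝ) n]
          have hn : ∀ n : ℕ, (n : ℝ) * ‖x‖ ≤ C := by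
            intro n
            have := hC _ (hmem n)
            simpa [norm_smul] using this
          have hxpos : 0 < ‖x‖ := norm_pos_iff.mpr hne
          obtain ⟨n, hn'⟩ := exists_nat_gt (C / ‖x‖)
          have h3 := hn n
          have h4 : C < (n : ℝ) * ‖x‖ := (div_lt_iff₀ hxpos).mp hn'
          linarith
        subst hx0
        exact ⟨0, h0P, by simp⟩
    · rw [Set.mem_smul_set_iff_inv_smul_mem₀ (ne_of_gt hc0)]
      have hsum : ∀ t : Fin d → ℤ, ∑ i, (c⁻¹ • x) i * (t i : ℝ) = c⁻¹ * ∑ i, x i * (t i : ℝ) := by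
        intro t
        rw [Finset.mul_sum]
        exact Finset.sum_congr rfl fun i _ => by simp [mul_assoc]
      constructor
      · intro h t ht
        have h1 := hPmem _ h t ht
        rw [hsum, inv_mul_le_iff₀ hc0] at h1
        linarith
      · intro h
        apply hKey
        intro t ht
        rw [hsum, inv_mul_le_iff₀ hc0]
        have := h t ht
        linarith
  have hB : ∀ (c : ℝ), 0 < c → ∀ x : Fin d → ℝ,
      (x ∈ interior (c • P) ↔ ∀ t ∈ T, ∑ i, x i * (t i : ℝ) < c) := by
    intro c hc x
    constructor
    · intro hx t ht
      by_contra hlt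
      push_neg at hlt
      by_cases h2 : ∑ i, (t i : ℝ) * (t i : ℝ) = 0
      · have hz : ∀ i ∈ Finset.univ, (t i : ℝ) * (t i : ℝ) = 0 :=
          (Finset.sum_eq_zero_iff_of_nonneg (fun i _ => mul_self_nonneg _)).mp h2
        have : ∑ i, x i * (t i : ℝ) = 0 :=
          Finset.sum_eq_zero fun i hi => by
            rw [mul_self_eq_zero.mp (hz i hi), mul_zero]
        linarith
      · have h2pos : 0 < ∑ i, (t i : ℝ) * (t i : ℝ) :=
          lt_of_le_of_ne (Finset.sum_nonneg fun i _ => mul_self_nonneg _) (Ne.symm h2)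
        have hcont : Continuous (fun s : ℝ => x + s • (fun i => (t i : ℝ))) :=
          continuous_const.add (continuous_id.smul continuous_const)
        have hnhds : (fun s : ℝ => x + s • (fun i => (t i : ℝ))) ⁻¹' interior (c • P) ∈
            nhds (0 : ℝ) := by
          apply (isOpen_interior.preimage hcont).mem_nhds
          simpa using hx
        obtain ⟨ε, hε, hball⟩ := Metric.mem_nhds_iff.mp hnhds
        have hmem : x + (ε/2) • (fun i => (t i : ℝ)) ∈ c • P := by
          apply interior_subset
          apply hball
          rw [Metric.mem_ball, dist_zero_right, Real.norm_eq_abs, abs_of_pos (by linarith)]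
          linarith
        have h1 := (hA c hc.le _).mp hmem t ht
        have hsum : ∑ i, (x + (ε/2) • fun i => (t i : ℝ)) i * (t i : ℝ)
            = (∑ i, x i * (t i : ℝ)) + (ε/2) * ∑ i, (t i : ℝ) * (t i : ℝ) := by
          rw [Finset.mul_sum, ← Finset.sum_add_distrib]
          refine Finset.sum_congr rfl fun i _ => ?_
          simp only [Pi.add_apply, Pi.smul_apply, smul_eq_mul]
          ring
        rw [hsum] at h1
        nlinarith
    · intro hx
      have hUopen : IsOpen {y : Fin d → ℝ | ∀ t ∈ T, ∑ i, y i * (t i : ℝ) < c} := by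
        have heq : {y : Fin d → ℝ | ∀ t ∈ T, ∑ i, y i * (t i : ℝ) < c} =
            ⋂ t ∈ T, {y : Fin d → ℝ | ∑ i, y i * (t i : ℝ) < c} := by
          ext y; simp
        rw [heq]
        apply isOpen_biInter_finset
        intro t ht
        exact isOpen_lt (continuous_finset_sum Finset.univ fun i _ =>
          (continuous_apply i).mul continuous_const) continuous_const
      have hsub : {y : Fin d → ℝ | ∀ t ∈ T, ∑ i, y i * (t i : ℝ) < c} ⊆ c • P := by
        intro y hy
        exact (hA c hc.le y).mpr fun t ht => (hy t ht).le
      exact interior_maximal hsub hUopen hx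
  have hsets : ∀ m : ℕ, 1 ≤ m →
      {v : Fin d → ℤ | (fun i => (v i : ℝ)) ∈ ((m - 1 : ℕ) : ℝ) • P} =
      {v : Fin d → ℤ | (fun i => (v i : ℝ)) ∈ interior ((m : ℝ) • P)} := by
    intro m hm
    ext v
    simp only [Set.mem_setOf_eq]
    rw [hA _ (Nat.cast_nonneg _), hB _ (by exact_mod_cast hm : (0:ℝ) < (m:ℝ))]
    have key : ∀ t : Fin d → ℤ,
        ((∑ i, (fun i => (v i : ℝ)) i * (t i : ℝ)) ≤ ((m - 1 : ℕ) : ℝ) ↔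
         (∑ i, (fun i => (v i : ℝ)) i * (t i : ℝ)) < (m : ℝ)) := by
      intro t
      have hc : ∑ i, (fun i => (v i : ℝ)) i * (t i : ℝ) = ((∑ i, v i * t i : ℤ) : ℝ) := by
        push_cast; rfl
      rw [hc]
      set k : ℤ := ∑ i, v i * t i with hk
      constructor
      · intro h
        have hm1 : ((m - 1 : ℕ) : ℝ) = (m : ℝ) - 1 := by
          push_cast [Nat.cast_sub hm]; ring
        rw [hm1] at h
        have hk1 : k ≤ (m : ℤ) - 1 := by exact_mod_cast h
        have hk2 : k < (m : ℤ) := by omega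
        exact_mod_cast hk2
      · intro h
        have hk2 : k < (m : ℤ) := by exact_mod_cast h
        have hk1 : k ≤ (m : ℤ) - 1 := by omega
        have : (k : ℝ) ≤ (m : ℝ) - 1 := by exact_mod_cast hk1
        have hm1 : ((m - 1 : ℕ) : ℝ) = (m : ℝ) - 1 := by
          push_cast [Nat.cast_sub hm]; ring
        rw [hm1]
        linarith
    exact ⟨fun h t ht => (key t).mp (h t ht), fun h t ht => (key t).mpr (h t ht)⟩
  have hvals : ∀ m : ℕ, 1 ≤ m → f ((m : ℤ) - 1) = (-1 : ℚ) ^ d * f (-(m : ℤ)) := by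
    intro m hm
    have h1 : ((m - 1 : ℕ) : ℤ) = (m : ℤ) - 1 := by
      push_cast [Nat.cast_sub hm]; ring
    rw [← h1, hf (m - 1), hrec m hm, hsets m hm]
    have hsq : (-1 : ℚ) ^ d * (-1 : ℚ) ^ d = 1 := by
      rw [← pow_add]
      exact Even.neg_one_pow ⟨d, rfl⟩
    rw [← mul_assoc, hsq, one_mul]
  set q : Polynomial ℚ :=
    p.comp (Polynomial.X - 1) - ((-1 : ℚ) ^ d) • p.comp (-Polynomial.X) with hq
  have hqroot : ∀ n : ℕ, q.IsRoot ((n : ℚ) + 1) := by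
    intro n
    have hv := hvals (n + 1) (Nat.le_add_left 1 n)
    rw [hpoly, hpoly] at hv
    simp only [Polynomial.IsRoot, hq, Polynomial.eval_sub, Polynomial.eval_smul,
      Polynomial.eval_comp, Polynomial.eval_X, Polynomial.eval_one, Polynomial.eval_neg,
      smul_eq_mul]
    push_cast at hv ⊢
    linarith
  have hq0 : q = 0 := by
    apply Polynomial.eq_zero_of_infinite_isRoot
    apply Set.infinite_of_injective_forall_mem (f := fun n : ℕ => (n : ℚ) + 1)
    · intro a b hab
      have : (a : ℚ) = (b : ℚ) := by
        simpa using hab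
      exact_mod_cast this
    · exact hqroot
  intro m
  have hev : q.eval ((m : ℚ)) = 0 := by rw [hq0]; simp
  rw [hq] at hev
  simp only [Polynomial.eval_sub, Polynomial.eval_smul, Polynomial.eval_comp,
    Polynomial.eval_X, Polynomial.eval_one, Polynomial.eval_neg, smul_eq_mul] at hev
  have hfin : p.eval ((m : ℚ) - 1) = (-1 : ℚ) ^ d * p.eval (-(m : ℚ)) := by linarith
  rw [hpoly, hpoly]
  push_cast
  exact hfin
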